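/- Let C be a BL-chain and let 𝐚 = (1^p, a) and 𝐛 = (1^q, b) be good sequences in C. Then the sum of sequences 𝐚 + 𝐛 equals (1^{p+q}, a + b, a ⊗ b) (that is, its first p + q entries are 1, the next two entries are a + b and a ⊗ b, and all later entries are 0), and this sequence is again a good sequence. -/

import Mathlib

/-- A BL-algebra: a bounded lattice with a commutative monoid operation `mul`
(written ⊗, with unit `⊤` playing the role of 1 and `⊥` the role of 0),
a residuum `imp` (written →), satisfying residuation, divisibility and
prelinearity. -/
class BLAlgebra (L : Type*) extends Lattice L, BoundedOrder L where
  mul : L → L → L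
  imp : L → L → L
  mul_comm : ∀ x y : L, mul x y = mul y x
  mul_assoc : ∀ x y z : L, mul (mul x y) z = mul x (mul y z)
  mul_top : ∀ x : L, mul x ⊤ = x
  residuation : ∀ x y z : L, mul x y ≤ z ↔ x ≤ imp y z
  divisibility : ∀ x y : L, x ⊓ y = mul x (imp x y)
  prelinearity : ∀ x y : L, imp x y ⊔ imp y x = ⊤

namespace BLAlgebra

variable {L : Type*} [BLAlgebra L]

/-- Negation: x̄ := x → 0. -/
def neg (x : L) : L := imp x ⊥

/-- Pseudo-addition: x ⊘ y := x̄ → y. -/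
def oslash (x y : L) : L := imp (neg x) y

/-- Addition: x + y := (x ⊘ y) ∧ (y ⊘ x). -/
def add (x y : L) : L := oslash x y ⊓ oslash y x

end BLAlgebra

open BLAlgebra
/-- A good sequence in a BL-algebra `L` (indexed from 0, so `a 0` is the entry a₁):
aᵢ + aᵢ₊₁ = aᵢ for all i, and aᵣ = 0 for all sufficiently large r. -/
def BLAlgebra.IsGood {L : Type*} [BLAlgebra L] (a : ℕ → L) : Prop :=
  (∀ i, add (a i) (a (i + 1)) = a i) ∧ ∃ n, ∀ r, n < r → a r = ⊥

/-- Sum (under the BL-algebra addition) of a list of elements. -/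
def BLAlgebra.bigAdd {L : Type*} [BLAlgebra L] (l : List L) : L := l.foldr add ⊥

/-- Sum of sequences: cᵢ := aᵢ + (aᵢ₋₁ ⊗ b₁) + ⋯ + (a₁ ⊗ bᵢ₋₁) + bᵢ
(written with 0-based indexing: the entry at index k is
a k + (a (k-1) ⊗ b 0) + ⋯ + (a 0 ⊗ b (k-1)) + b k). -/
def BLAlgebra.seqAdd {L : Type*} [BLAlgebra L] (a b : ℕ → L) : ℕ → L :=
  fun k => bigAdd (a k :: (((List.range k).map fun j => mul (a (k - 1 - j)) (b j)) ++ [b k]))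

/-- The good sequence (1^p, x): p leading ⊤'s, then x, then ⊥'s. -/
def oneSeq {L : Type*} [BLAlgebra L] (p : ℕ) (x : L) : ℕ → L :=
  fun i => if i < p then ⊤ else if i = p then x else ⊥

/-- The sequence (1^p, x, y): p leading ⊤'s, then x, then y, then ⊥'s. -/
def twoSeq {L : Type*} [BLAlgebra L] (p : ℕ) (x y : L) : ℕ → L :=
  fun i => if i < p then ⊤ else if i = p then x else if i = p + 1 then y else ⊥

section Aux

variable {L : Type*} [BLAlgebra L]

lemma bl_top_mul (x : L) : mul ⊤ x = x := by
  rw [BLAlgebra.mul_comm, BLAlgebra.mul_top]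

lemma bl_imp_eq_top_iff {x y : L} : imp x y = ⊤ ↔ x ≤ y := by
  constructor
  · intro h
    have := (BLAlgebra.residuation (⊤ : L) x y).mpr (h ▸ le_refl (⊤ : L))
    rwa [bl_top_mul] at this
  · intro h
    refine le_antisymm le_top ?_
    exact (BLAlgebra.residuation (⊤ : L) x y).mp (by rwa [bl_top_mul])

lemma bl_imp_bot_left (x : L) : imp ⊥ x = ⊤ := bl_imp_eq_top_iff.mpr bot_le

lemma bl_imp_top_right (x : L) : imp x ⊤ = ⊤ := bl_imp_eq_top_iff.mpr le_top

lemma bl_imp_top_left (x : L) : imp ⊤ x = x := by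
  refine le_antisymm ?_ ?_
  · have := (BLAlgebra.residuation (imp ⊤ x) (⊤ : L) x).mpr le_rfl
    rwa [BLAlgebra.mul_top] at this
  · exact (BLAlgebra.residuation x (⊤ : L) x).mp (by rw [BLAlgebra.mul_top])

lemma bl_mul_bot (x : L) : mul x ⊥ = ⊥ := by
  refine le_antisymm ?_ bot_le
  exact (BLAlgebra.residuation x ⊥ ⊥).mpr (by rw [bl_imp_bot_left]; exact le_top)

lemma bl_bot_mul (x : L) : mul ⊥ x = ⊥ := by rw [BLAlgebra.mul_comm, bl_mul_bot]

lemma bl_mul_le_mul {x y : L} (z : L) (h : x ≤ y) : mul x z ≤ mul y z :=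
  (BLAlgebra.residuation x z (mul y z)).mpr
    (h.trans ((BLAlgebra.residuation y z (mul y z)).mp le_rfl))

lemma bl_mul_neg (x : L) : mul x (neg x) = ⊥ := by
  refine le_antisymm ?_ bot_le
  rw [BLAlgebra.mul_comm]
  exact (BLAlgebra.residuation (neg x) x ⊥).mpr le_rfl

lemma bl_le_negneg (x : L) : x ≤ neg (neg x) :=
  (BLAlgebra.residuation x (neg x) ⊥).mp (le_of_eq (bl_mul_neg x))

lemma bl_neg_top : (neg (⊤ : L)) = ⊥ := bl_imp_top_left ⊥

lemma bl_neg_bot : (neg (⊥ : L)) = ⊤ := bl_imp_bot_left ⊥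

lemma bl_oslash_bot_left (x : L) : oslash ⊥ x = x := by
  rw [oslash, bl_neg_bot, bl_imp_top_left]

lemma bl_oslash_top (x : L) : oslash x ⊤ = ⊤ := by rw [oslash, bl_imp_top_right]

lemma bl_oslash_top_left (x : L) : oslash ⊤ x = ⊤ := by
  rw [oslash, bl_neg_top, bl_imp_bot_left]

lemma bl_add_comm (x y : L) : add x y = add y x := by rw [add, add, inf_comm]

lemma bl_add_bot (x : L) : add x ⊥ = x := by
  rw [add, bl_oslash_bot_left, oslash]
  exact inf_eq_right.mpr (bl_le_negneg x)

lemma bl_bot_add (x : L) : add ⊥ x = x := by rw [bl_add_comm, bl_add_bot]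

lemma bl_add_top (x : L) : add x ⊤ = ⊤ := by
  rw [add, bl_oslash_top, bl_oslash_top_left, inf_idem]

lemma bl_top_add (x : L) : add ⊤ x = ⊤ := by rw [bl_add_comm, bl_add_top]

/-- Key dichotomy in a BL-chain. -/
lemma bl_dichotomy (htot : ∀ x y : L, x ≤ y ∨ y ≤ x) (a b : L) :
    mul a b = ⊥ ∨ add a b = ⊤ := by
  rcases htot (neg a) b with h | h
  · rcases htot (neg b) a with h2 | h2
    · right
      rw [add, oslash, oslash, bl_imp_eq_top_iff.mpr h, bl_imp_eq_top_iff.mpr h2, inf_idem]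
    · left
      refine le_antisymm ?_ bot_le
      calc mul a b ≤ mul (neg b) b := bl_mul_le_mul b h2
        _ = ⊥ := by rw [BLAlgebra.mul_comm]; exact bl_mul_neg b
  · left
    refine le_antisymm ?_ bot_le
    calc mul a b = mul b a := BLAlgebra.mul_comm a b
      _ ≤ mul (neg a) a := bl_mul_le_mul a h
      _ = ⊥ := by rw [BLAlgebra.mul_comm]; exact bl_mul_neg a

lemma bl_add_absorb (htot : ∀ x y : L, x ≤ y ∨ y ≤ x) (a b : L) :
    add (add a b) (mul a b) = add a b := by
  rcases bl_dichotomy htot a b with h | h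
  · rw [h, bl_add_bot]
  · rw [h, bl_top_add]

/- list lemmas -/

lemma bl_foldr_bots (c : L) : ∀ (l : List L), (∀ z ∈ l, z = ⊥) → l.foldr add c = c
  | [], _ => rfl
  | x :: t, h => by
    rw [List.foldr_cons, h x List.mem_cons_self,
      bl_foldr_bots c t (fun z hz => h z (List.mem_cons_of_mem _ hz)), bl_bot_add]

lemma bl_bigAdd_top : ∀ (l : List L), ⊤ ∈ l → BLAlgebra.bigAdd l = ⊤
  | x :: t, h => by
    rcases List.mem_cons.mp h with h | h
    · rw [BLAlgebra.bigAdd, List.foldr_cons, ← h, bl_top_add]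
    · show add x (BLAlgebra.bigAdd t) = ⊤
      rw [bl_bigAdd_top t h, bl_add_top]

lemma bl_foldr_single (f : ℕ → L) (c : L) :
    ∀ (n m : ℕ), m < n → (∀ j, j < n → j ≠ m → f j = ⊥) →
      ((List.range n).map f).foldr add c = add (f m) c := by
  intro n
  induction n with
  | zero => omega
  | succ n ih =>
    intro m hm h
    rw [List.range_succ, List.map_append, List.foldr_append]
    simp only [List.map_cons, List.map_nil, List.foldr_cons, List.foldr_nil]
    rcases Nat.lt_or_ge m n with hmn | hmn
    · rw [h n (by omega) (by omega), bl_bot_add]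
      exact ih m hmn (fun j hj hj' => h j (by omega) hj')
    · have hm' : m = n := by omega
      subst hm'
      exact bl_foldr_bots _ _ (by
        intro z hz
        rcases List.mem_map.mp hz with ⟨j, hj, rfl⟩
        exact h j (by simp at hj; omega) (by simp at hj; omega))

lemma bl_foldr_two (f : ℕ → L) (c : L) :
    ∀ (n i j : ℕ), i < j → j < n → (∀ m, m < n → m ≠ i → m ≠ j → f m = ⊥) →
      ((List.range n).map f).foldr add c = add (f i) (add (f j) c) := by
  intro n
  induction n with
  | zero => omega
  | succ n ih =>
    intro i j hij hj h
    rw [List.range_succ, List.map_append, List.foldr_append]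
    simp only [List.map_cons, List.map_nil, List.foldr_cons, List.foldr_nil]
    rcases Nat.lt_or_ge j n with hjn | hjn
    · rw [h n (by omega) (by omega) (by omega), bl_bot_add]
      exact ih i j hij hjn (fun m hm h1 h2 => h m (by omega) h1 h2)
    · obtain rfl : j = n := by omega
      exact bl_foldr_single f _ _ i hij (fun m hm h1 => h m (by omega) h1 (by omega))

end Aux

section Seqs

variable {L : Type*} [BLAlgebra L]

lemma oneSeq_lt {p i : ℕ} (h : i < p) (x : L) : oneSeq p x i = ⊤ := if_pos h

lemma oneSeq_self (p : ℕ) (x : L) : oneSeq p x p = x := by simp [oneSeq]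

lemma oneSeq_gt {p i : ℕ} (h : p < i) (x : L) : oneSeq p x i = ⊥ := by
  unfold oneSeq
  rw [if_neg (by omega), if_neg (by omega)]

lemma twoSeq_lt {p i : ℕ} (h : i < p) (x y : L) : twoSeq p x y i = ⊤ := if_pos h

lemma twoSeq_self (p : ℕ) (x y : L) : twoSeq p x y p = x := by simp [twoSeq]

lemma twoSeq_succ (p : ℕ) (x y : L) : twoSeq p x y (p + 1) = y := by simp [twoSeq]

lemma twoSeq_gt {p i : ℕ} (h : p + 1 < i) (x y : L) : twoSeq p x y i = ⊥ := by
  unfold twoSeq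
  rw [if_neg (by omega), if_neg (by omega), if_neg (by omega)]

lemma seqAdd_entry (u v : ℕ → L) (k : ℕ) :
    seqAdd u v k =
      add (u k) (((List.range k).map fun j => mul (u (k - 1 - j)) (v j)).foldr add
        (add (v k) ⊥)) := by
  simp [BLAlgebra.seqAdd, BLAlgebra.bigAdd, List.foldr_append]

end Seqs

/-- In a BL-chain, (1^p, a) + (1^q, b) = (1^{p+q}, a + b, a ⊗ b),
and this is again a good sequence. -/
theorem sum_of_good_seqs_chain {L : Type*} [BLAlgebra L]
    (htot : ∀ x y : L, x ≤ y ∨ y ≤ x) (p q : ℕ) (a b : L) :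
    seqAdd (oneSeq p a) (oneSeq q b) = twoSeq (p + q) (add a b) (mul a b) ∧
    IsGood (seqAdd (oneSeq p a) (oneSeq q b)) := by
  have heq : seqAdd (oneSeq p a) (oneSeq q b) = twoSeq (p + q) (add a b) (mul a b) := by
    funext k
    rcases Nat.lt_or_ge k (p + q) with hk | hk
    · -- k < p + q : everything is ⊤
      rw [twoSeq_lt hk]
      show BLAlgebra.bigAdd (oneSeq p a k ::
        (((List.range k).map fun j => mul (oneSeq p a (k - 1 - j)) (oneSeq q b j)) ++
          [oneSeq q b k])) = ⊤
      apply bl_bigAdd_top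
      rcases Nat.lt_or_ge k p with hkp | hkp
      · exact List.mem_cons.mpr (Or.inl (oneSeq_lt hkp a).symm)
      · rcases Nat.lt_or_ge k q with hkq | hkq
        · exact List.mem_cons.mpr (Or.inr (List.mem_append.mpr (Or.inr
            (List.mem_singleton.mpr (oneSeq_lt hkq b).symm))))
        · refine List.mem_cons.mpr (Or.inr (List.mem_append.mpr (Or.inl
            (List.mem_map.mpr ⟨k - p, List.mem_range.mpr (by omega), ?_⟩))))
          rw [show k - 1 - (k - p) = p - 1 from by omega, oneSeq_lt (by omega) a,
            oneSeq_lt (show k - p < q by omega) b, BLAlgebra.mul_top]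
    by_cases hk1 : k = p + q
    · subst hk1
      by_cases hq : q = 0
      · subst hq
        simp only [Nat.add_zero]
        by_cases hp : p = 0
        · subst hp
          rw [seqAdd_entry]
          simp only [List.range_zero, List.map_nil, List.foldr_nil]
          rw [oneSeq_self, oneSeq_self, bl_add_bot, twoSeq_self]
        · rw [seqAdd_entry, twoSeq_self]
          have hbot : ∀ j, j < p → j ≠ 0 →
              (fun j => mul (oneSeq p a (p - 1 - j)) (oneSeq 0 b j)) j = ⊥ := by
            intro j hj hj0
            beta_reduce
            rw [oneSeq_gt (show 0 < j by omega) b, bl_mul_bot]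
          rw [bl_foldr_single _ _ _ 0 (by omega) hbot]
          beta_reduce
          rw [oneSeq_self, oneSeq_gt (show 0 < p by omega) b,
            oneSeq_lt (show p - 1 - 0 < p by omega) a, oneSeq_self, bl_top_mul,
            bl_add_bot, bl_add_bot]
      · by_cases hp : p = 0
        · subst hp
          simp only [Nat.zero_add]
          rw [seqAdd_entry, twoSeq_self]
          have hbot : ∀ j, j < q → j ≠ q - 1 →
              (fun j => mul (oneSeq 0 a (q - 1 - j)) (oneSeq q b j)) j = ⊥ := by
            intro j hj hj1
            beta_reduce
            rw [oneSeq_gt (show 0 < q - 1 - j by omega) a, bl_bot_mul]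
          rw [bl_foldr_single _ _ _ (q - 1) (by omega) hbot]
          beta_reduce
          rw [oneSeq_gt (show 0 < q by omega) a, oneSeq_self,
            show q - 1 - (q - 1) = 0 from by omega, oneSeq_self,
            oneSeq_lt (show q - 1 < q by omega) b, BLAlgebra.mul_top,
            bl_add_bot, bl_bot_add]
        · rw [seqAdd_entry, twoSeq_self]
          have hbot : ∀ m, m < p + q → m ≠ q - 1 → m ≠ q →
              (fun j => mul (oneSeq p a (p + q - 1 - j)) (oneSeq q b j)) m = ⊥ := by
            intro m hm h1 h2
            beta_reduce
            rcases Nat.lt_or_ge m q with hmq | hmq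
            · rw [oneSeq_gt (show p < p + q - 1 - m by omega) a, bl_bot_mul]
            · rw [oneSeq_gt (show q < m by omega) b, bl_mul_bot]
          rw [bl_foldr_two _ _ _ (q - 1) q (by omega) (by omega) hbot]
          beta_reduce
          rw [oneSeq_gt (show p < p + q by omega) a, oneSeq_gt (show q < p + q by omega) b,
            show p + q - 1 - (q - 1) = p from by omega,
            show p + q - 1 - q = p - 1 from by omega,
            oneSeq_self, oneSeq_lt (show q - 1 < q by omega) b,
            oneSeq_lt (show p - 1 < p by omega) a, oneSeq_self,
            BLAlgebra.mul_top, bl_top_mul, bl_add_bot, bl_add_bot, bl_bot_add]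
    · by_cases hk2 : k = p + q + 1
      · subst hk2
        rw [seqAdd_entry, twoSeq_succ]
        have hbot : ∀ j, j < p + q + 1 → j ≠ q →
            (fun j => mul (oneSeq p a (p + q + 1 - 1 - j)) (oneSeq q b j)) j = ⊥ := by
          intro j hj hjq
          beta_reduce
          rcases Nat.lt_or_ge j q with h | h
          · rw [oneSeq_gt (show p < p + q + 1 - 1 - j by omega) a, bl_bot_mul]
          · rw [oneSeq_gt (show q < j by omega) b, bl_mul_bot]
        rw [bl_foldr_single _ _ _ q (by omega) hbot]
        beta_reduce
        rw [oneSeq_gt (show p < p + q + 1 by omega) a,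
          oneSeq_gt (show q < p + q + 1 by omega) b,
          show p + q + 1 - 1 - q = p from by omega, oneSeq_self, oneSeq_self,
          bl_add_bot, bl_add_bot, bl_bot_add]
      · have hk3 : p + q + 1 < k := by omega
        rw [seqAdd_entry, twoSeq_gt hk3]
        have hbot : ∀ z ∈ (List.range k).map
            (fun j => mul (oneSeq p a (k - 1 - j)) (oneSeq q b j)), z = ⊥ := by
          intro z hz
          rcases List.mem_map.mp hz with ⟨j, hj, rfl⟩
          have hj' : j < k := List.mem_range.mp hj
          rcases Nat.lt_or_ge q j with h | h
          · rw [oneSeq_gt h b, bl_mul_bot]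
          · rw [oneSeq_gt (show p < k - 1 - j by omega) a, bl_bot_mul]
        rw [bl_foldr_bots _ _ hbot, oneSeq_gt (show p < k by omega) a,
          oneSeq_gt (show q < k by omega) b, bl_add_bot, bl_add_bot]
  refine ⟨heq, ?_⟩
  rw [heq]
  constructor
  · intro i
    rcases Nat.lt_or_ge i (p + q) with h | h
    · rw [twoSeq_lt h, bl_top_add]
    · by_cases h1 : i = p + q
      · subst h1
        rw [twoSeq_self, twoSeq_succ]
        exact bl_add_absorb htot a b
      · by_cases h2 : i = p + q + 1
        · subst h2
          rw [twoSeq_succ, twoSeq_gt (by omega), bl_add_bot]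
        · rw [twoSeq_gt (show p + q + 1 < i by omega),
            twoSeq_gt (show p + q + 1 < i + 1 by omega), bl_add_bot]
  · exact ⟨p + q + 1, fun r hr => twoSeq_gt hr _ _⟩
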